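/- Let K be a self-similar compact set of module μ and ratio ρ, with T_u := K^(u) \ K^(u+1). Then for every ordinal α with 0 ≤ α < ω^ω and u ≥ 1, T_u[α] = K[ω^u·(α+1)], and T_0[α] = K[α] if α < ω, while T_0[α] = K[α+1] if α ≥ ω. -/

import Mathlib

open Ordinal Filter Topology Set

/-- The `n`-th derived set of `A ⊆ ℝ`. -/
noncomputable def iterDeriv (A : Set ℝ) (n : ℕ) : Set ℝ := (derivedSet (X := ℝ))^[n] A

/-- The ordinal `ω ^ ω`. -/
noncomputable def wOmega : Ordinal.{0} := Ordinal.omega0 ^ Ordinal.omega0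

/-- An enumeration of `K ⊆ ℝ` witnessing that `K`, with the reverse of the usual order,
is well-ordered with order type `ω ^ ω + 1`: its elements are exactly `e α` for
`α ≤ ω ^ ω`, and the enumeration is strictly order-reversing. `e α` is the element
written `K[α]`. -/
structure OrdEnum (K : Set ℝ) where
  e : Ordinal.{0} → ℝ
  mem : ∀ α ≤ wOmega, e α ∈ K
  surj : ∀ x ∈ K, ∃ α ≤ wOmega, e α = x
  anti : ∀ ⦃α β : Ordinal.{0}⦄, α ≤ wOmega → β ≤ wOmega → (α < β ↔ e β < e α)

/-- An enumeration of a set `S ⊆ ℝ` of reverse-order type `ω ^ ω` (indices `α < ω ^ ω`),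
strictly order-reversing; `e α` is the element written `S[α]`. -/
structure SubEnum (S : Set ℝ) where
  e : Ordinal.{0} → ℝ
  mem : ∀ α < wOmega, e α ∈ S
  surj : ∀ x ∈ S, ∃ α < wOmega, e α = x
  anti : ∀ ⦃α β : Ordinal.{0}⦄, α < wOmega → β < wOmega → (α < β ↔ e β < e α)

/-- A self-similar compact set of ratio `ρ > 1` and module `μ ≥ 1`:
a compact `K ⊆ [0, ∞)`, well-ordered by the reverse usual order with order
type `ω ^ ω + 1`, satisfying `ρ • K^(μ) = K`. -/
def SelfSimilar (K : Set ℝ) (ρ : ℝ) (μ : ℕ) : Prop :=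
  IsCompact K ∧ K ⊆ Set.Ici 0 ∧ 1 < ρ ∧ 1 ≤ μ ∧
    (fun x => ρ * x) '' iterDeriv K μ = K ∧ Nonempty (OrdEnum K)

/-! ### Basic ordinal facts -/

abbrev Ordinal.IsLimit (o : Ordinal) : Prop := Order.IsSuccLimit o

theorem Ordinal.IsLimit.succ_lt {a o : Ordinal} (h : o.IsLimit) (ha : a < o) : Order.succ a < o :=
  Order.IsSuccLimit.succ_lt h ha

theorem Ordinal.IsLimit.pos {o : Ordinal} (h : o.IsLimit) : 0 < o := Order.IsSuccLimit.pos h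

theorem Ordinal.isLimit_opow {a b : Ordinal} (a1 : 1 < a) (h : b.IsLimit) : (a ^ b).IsLimit :=
  isSuccLimit_opow a1 h

theorem Ordinal.isLimit_omega0 : Ordinal.omega0.IsLimit := isSuccLimit_omega0

theorem Ordinal.isLimit_iff_omega0_dvd {a : Ordinal} : a.IsLimit ↔ a ≠ 0 ∧ Ordinal.omega0 ∣ a :=
  isSuccLimit_iff_omega0_dvd

theorem Ordinal.not_succ_isLimit (o : Ordinal) : ¬ (Order.succ o).IsLimit :=
  Order.not_isSuccLimit_succ o

theorem Ordinal.omega0_le_of_isLimit {o : Ordinal} (h : o.IsLimit) : Ordinal.omega0 ≤ o :=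
  omega0_le_of_isSuccLimit h

theorem Ordinal.zero_or_succ_or_limit (o : Ordinal) :
    o = 0 ∨ (∃ a, o = Order.succ a) ∨ o.IsLimit := by
  rcases zero_or_succ_or_isSuccLimit o with h | ⟨a, ha⟩ | h
  · exact Or.inl h
  · exact Or.inr (Or.inl ⟨a, ha.symm⟩)
  · exact Or.inr (Or.inr h)

theorem Ordinal.mul_lt_mul_iff_left {a b c : Ordinal} (ha : 0 < a) : a * b < a * c ↔ b < c :=
  ⟨fun h => lt_of_not_ge fun h' => (not_lt.2 (mul_le_mul_right h' a)) h,
    fun h => mul_lt_mul_of_pos_left h ha⟩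

theorem Ordinal.le_add_left (a b : Ordinal) : a ≤ b + a := le_add_self

theorem Ordinal.le_add_right (a b : Ordinal) : a ≤ a + b := le_self_add

theorem Ordinal.zero_le (o : Ordinal) : 0 ≤ o := _root_.zero_le

theorem Ordinal.mul_ne_zero {a b : Ordinal} (ha : a ≠ 0) (hb : b ≠ 0) : a * b ≠ 0 :=
  _root_.mul_ne_zero ha hb

theorem one_le_iff_ne_zero {o : Ordinal} : 1 ≤ o ↔ o ≠ 0 := Ordinal.one_le_iff_ne_zero

theorem Ordinal.le_of_mul_le_mul_left {a b c : Ordinal} (h : c * a ≤ c * b) (hc : 0 < c) :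
    a ≤ b :=
  le_of_not_gt fun h' => not_lt.2 h (mul_lt_mul_of_pos_left h' hc)


lemma wOmega_isLimit : wOmega.IsLimit := isLimit_opow one_lt_omega0 isLimit_omega0

lemma omega0_le_wOmega : Ordinal.omega0 ≤ wOmega := by
  simpa [wOmega] using Ordinal.opow_le_opow_right omega0_pos one_lt_omega0.le

lemma omega0_mul_wOmega : Ordinal.omega0 * wOmega = wOmega := by
  rw [wOmega]
  nth_rewrite 1 [← opow_one Ordinal.omega0]
  rw [← opow_add, one_add_omega0]

lemma opow_mul_wOmega (u : ℕ) : Ordinal.omega0 ^ (u : Ordinal) * wOmega = wOmega := by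
  rw [wOmega, ← opow_add, Ordinal.natCast_add_omega0]

lemma one_add_le_wOmega {α : Ordinal} (h : α ≤ wOmega) : 1 + α ≤ wOmega := by
  calc 1 + α ≤ 1 + wOmega := by exact add_le_add_right h 1
  _ = wOmega := one_add_of_omega0_le omega0_le_wOmega

lemma ord_mul_left_cancel {a b c : Ordinal} (ha : 0 < a) (h : a * b = a * c) : b = c := by
  rcases lt_trichotomy b c with hc | hc | hc
  · exact absurd h (ne_of_lt ((Ordinal.mul_lt_mul_iff_left ha).2 hc))
  · exact hc
  · exact absurd h.symm (ne_of_lt ((Ordinal.mul_lt_mul_iff_left ha).2 hc))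

lemma OrdEnum.inj {K : Set ℝ} (E : OrdEnum K) {α β : Ordinal}
    (hα : α ≤ wOmega) (hβ : β ≤ wOmega) (h : E.e α = E.e β) : α = β := by
  rcases lt_trichotomy α β with hc | hc | hc
  · exact absurd h (ne_of_gt ((E.anti hα hβ).1 hc))
  · exact hc
  · exact absurd h (ne_of_lt ((E.anti hβ hα).1 hc))

lemma OrdEnum.le_iff {K : Set ℝ} (E : OrdEnum K) {α β : Ordinal}
    (hα : α ≤ wOmega) (hβ : β ≤ wOmega) : α ≤ β ↔ E.e β ≤ E.e α := by
  rw [← not_lt, ← not_lt, not_iff_not]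
  exact E.anti hβ hα

/-! ### Characterization of the derived set of `K` -/

lemma acc_of_limit {K : Set ℝ} (hK : IsCompact K) (E : OrdEnum K) {α : Ordinal}
    (hα : α ≤ wOmega) (hl : α.IsLimit) : E.e α ∈ derivedSet K := by
  set S : Set ℝ := E.e '' Set.Iio α with hS
  have hSne : S.Nonempty := ⟨E.e 0, 0, hl.pos, rfl⟩
  have hSsub : S ⊆ K := by
    rintro x ⟨β, hβ, rfl⟩
    exact E.mem β ((hβ.trans_le hα).le)
  have hbdd : BddBelow S := hK.bddBelow.mono hSsub
  have hlb : ∀ x ∈ S, E.e α ≤ x := by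
    rintro x ⟨β, hβ, rfl⟩
    exact ((E.anti ((hβ.trans_le hα).le) hα).1 hβ).le
  have hinf : sInf S = E.e α := by
    have hmem : sInf S ∈ K :=
      ((closure_mono hSsub).trans_eq hK.isClosed.closure_eq) (csInf_mem_closure hSne hbdd)
    obtain ⟨γ, hγ, hγe⟩ := E.surj _ hmem
    have h2 : γ ≤ α := by
      by_contra hcon
      push_neg at hcon
      have h1 : E.e α ≤ E.e γ := hγe ▸ le_csInf hSne hlb
      exact absurd h1 (not_le.2 ((E.anti hα hγ).1 hcon))
    have h1 : α ≤ γ := by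
      by_contra hcon
      push_neg at hcon
      have hγ1 : γ + 1 < α := hl.succ_lt hcon
      have hmem1 : E.e (γ + 1) ∈ S := ⟨γ + 1, hγ1, rfl⟩
      have hlt : E.e (γ + 1) < E.e γ := (E.anti hγ ((hγ1.trans_le hα).le)).1 (lt_add_one γ)
      exact absurd (csInf_le hbdd hmem1) (by rw [← hγe]; exact not_le.2 hlt)
    rw [← hγe, le_antisymm h2 h1]
  rw [mem_derivedSet, accPt_iff_nhds]
  intro U hU
  obtain ⟨ε, hε, hball⟩ := Metric.mem_nhds_iff.1 hU
  have : sInf S < E.e α + ε := by rw [hinf]; linarith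
  obtain ⟨x, hxS, hxlt⟩ := exists_lt_of_csInf_lt hSne this
  refine ⟨x, ⟨hball ?_, hSsub hxS⟩, ?_⟩
  · have hge : E.e α ≤ x := hlb x hxS
    rw [Metric.mem_ball, Real.dist_eq, abs_sub_lt_iff]
    constructor <;> linarith
  · obtain ⟨β, hβ, rfl⟩ := hxS
    exact ne_of_gt ((E.anti ((hβ.trans_le hα).le) hα).1 hβ)

lemma not_acc_of_not_limit {K : Set ℝ} (E : OrdEnum K) {α : Ordinal}
    (hα : α ≤ wOmega) (hl : ¬ α.IsLimit) : E.e α ∉ derivedSet K := by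
  have hαlt : α < wOmega := lt_of_le_of_ne hα (by rintro rfl; exact hl wOmega_isLimit)
  have hα1 : α + 1 ≤ wOmega := wOmega_isLimit.succ_lt hαlt |>.le
  -- every point of K in the chosen neighborhood equals E.e α
  rcases Ordinal.zero_or_succ_or_limit α with rfl | ⟨β, rfl⟩ | hlim
  · -- α = 0 : use the neighborhood (E.e 1, ∞)
    have h1W : (1 : Ordinal) ≤ wOmega := by simpa using hα1
    rw [mem_derivedSet, accPt_iff_nhds]
    push_neg
    refine ⟨Set.Ioi (E.e 1), isOpen_Ioi.mem_nhds
      ((E.anti (Ordinal.zero_le _) h1W).1 zero_lt_one), ?_⟩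
    rintro y ⟨hy1, hy2⟩
    obtain ⟨γ, hγ, rfl⟩ := E.surj y hy2
    have hlt1 : γ < 1 := (E.anti hγ h1W).2 hy1
    have : γ = 0 := lt_one_iff_zero.1 hlt1
    simp [this]
  · -- α = β + 1 : use the neighborhood (E.e (α+1), E.e β)
    rw [← Ordinal.add_one_eq_succ] at hα hα1 hαlt ⊢
    rw [mem_derivedSet, accPt_iff_nhds]
    push_neg
    have hβ : β ≤ wOmega := (lt_of_lt_of_le (lt_add_one β) hα).le
    refine ⟨Set.Ioo (E.e (β + 1 + 1)) (E.e β), isOpen_Ioo.mem_nhds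
      ⟨(E.anti hα hα1).1 (lt_add_one _), (E.anti hβ hα).1 (lt_add_one β)⟩, ?_⟩
    rintro y ⟨⟨hy1, hy1'⟩, hy2⟩
    obtain ⟨γ, hγ, rfl⟩ := E.surj y hy2
    have h1 : γ < β + 1 + 1 := (E.anti hγ hα1).2 hy1
    have h2 : β < γ := (E.anti hβ hγ).2 hy1'
    have hγeq : γ = β + 1 := by
      have hle : γ ≤ β + 1 := by
        rw [Ordinal.add_one_eq_succ (β + 1)] at h1
        exact Order.lt_succ_iff.1 h1
      have hge : β + 1 ≤ γ := by
        rw [Ordinal.add_one_eq_succ β]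
        exact Order.succ_le_of_lt h2
      exact le_antisymm hle hge
    rw [hγeq]
  · exact absurd hlim hl

lemma derivedSet_char {K : Set ℝ} (hK : IsCompact K) (E : OrdEnum K) :
    derivedSet K = {x | ∃ α ≤ wOmega, α.IsLimit ∧ E.e α = x} := by
  ext x
  constructor
  · intro hx
    have hxK : x ∈ K := hK.isClosed.closure_subset (derivedSet_subset_closure K hx)
    obtain ⟨α, hα, rfl⟩ := E.surj x hxK
    by_cases hl : α.IsLimit
    · exact ⟨α, hα, hl, rfl⟩
    · exact absurd hx (not_acc_of_not_limit E hα hl)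
  · rintro ⟨α, hα, hl, rfl⟩
    exact acc_of_limit hK E hα hl

/-- The derived set of `K` inherits an `OrdEnum` given by `α ↦ E.e (ω * (1 + α))`. -/
lemma derived_enum {K : Set ℝ} (hK : IsCompact K) (E : OrdEnum K) :
    ∃ E' : OrdEnum (derivedSet K), ∀ α, E'.e α = E.e (Ordinal.omega0 * (1 + α)) := by
  have hmul : ∀ α ≤ wOmega, Ordinal.omega0 * (1 + α) ≤ wOmega := by
    intro α hα
    calc Ordinal.omega0 * (1 + α) ≤ Ordinal.omega0 * wOmega :=
      mul_le_mul_right (one_add_le_wOmega hα) _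
    _ = wOmega := omega0_mul_wOmega
  have hlim : ∀ α : Ordinal, (Ordinal.omega0 * (1 + α)).IsLimit := by
    intro α
    rw [isLimit_iff_omega0_dvd]
    exact ⟨Ordinal.mul_ne_zero omega0_ne_zero
      (one_le_iff_ne_zero.1 (Ordinal.le_add_right 1 α)), ⟨1 + α, rfl⟩⟩
  have hchar := derivedSet_char hK E
  refine ⟨⟨fun α => E.e (Ordinal.omega0 * (1 + α)), ?_, ?_, ?_⟩, fun α => rfl⟩
  · intro α hα
    rw [hchar]
    exact ⟨_, hmul α hα, hlim α, rfl⟩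
  · intro x hx
    rw [hchar] at hx
    obtain ⟨γ, hγ, hγl, rfl⟩ := hx
    obtain ⟨β, rfl⟩ := (isLimit_iff_omega0_dvd.1 hγl).2
    have hβ0 : β ≠ 0 := by
      rintro rfl
      simp at hγl
    have hβ1 : 1 ≤ β := one_le_iff_ne_zero.2 hβ0
    refine ⟨β - 1, ?_, ?_⟩
    · calc β - 1 ≤ β := sub_le_self β 1
      _ ≤ wOmega := by
        have := hγ.trans_eq omega0_mul_wOmega.symm
        exact Ordinal.le_of_mul_le_mul_left this omega0_pos
    · show E.e (Ordinal.omega0 * (1 + (β - 1))) = E.e (Ordinal.omega0 * β)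
      rw [Ordinal.add_sub_cancel_of_le hβ1]
  · intro α β hα hβ
    show α < β ↔ E.e (Ordinal.omega0 * (1 + β)) < E.e (Ordinal.omega0 * (1 + α))
    rw [← E.anti (hmul α hα) (hmul β hβ), Ordinal.mul_lt_mul_iff_left omega0_pos,
      add_lt_add_iff_left]

/-! ### Enumerations of the iterated derived sets -/

lemma iterDeriv_compact {K : Set ℝ} (hK : IsCompact K) (u : ℕ) : IsCompact (iterDeriv K u) := by
  induction u with
  | zero => exact hK
  | succ n ih =>
    have : iterDeriv K (n + 1) = derivedSet (iterDeriv K n) := Function.iterate_succ_apply' _ _ _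
    rw [this]
    exact ih.of_isClosed_subset (isClosed_derivedSet _)
      ((derivedSet_subset_closure _).trans ih.isClosed.closure_eq.subset)

lemma iter_enum {K : Set ℝ} (hK : IsCompact K) (E : OrdEnum K) (u : ℕ) (hu : 1 ≤ u) :
    ∃ Eu : OrdEnum (iterDeriv K u), ∀ α,
      Eu.e α = E.e (Ordinal.omega0 ^ (u : Ordinal) * (1 + α)) := by
  induction u with
  | zero => omega
  | succ n ih =>
    rcases Nat.eq_or_lt_of_le hu with h1 | h2
    · -- n + 1 = 1, i.e. n = 0
      have hn : n = 0 := by omega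
      subst hn
      obtain ⟨E', hE'⟩ := derived_enum hK E
      have hiter : iterDeriv K 1 = derivedSet K := by
        simp [iterDeriv]
      rw [hiter]
      refine ⟨E', fun α => ?_⟩
      rw [hE']
      norm_num
    · have hn : 1 ≤ n := by omega
      obtain ⟨En, hEn⟩ := ih hn
      obtain ⟨E', hE'⟩ := derived_enum (iterDeriv_compact hK n) En
      have hiter : iterDeriv K (n + 1) = derivedSet (iterDeriv K n) :=
        Function.iterate_succ_apply' _ _ _
      rw [hiter]
      refine ⟨E', fun α => ?_⟩
      rw [hE', hEn]
      congr 1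
      have h1 : Ordinal.omega0 ≤ Ordinal.omega0 * (1 + α) := by
        conv_lhs => rw [← mul_one Ordinal.omega0]
        exact mul_le_mul_right (Ordinal.le_add_right 1 α) _
      rw [one_add_of_omega0_le h1, ← mul_assoc]
      congr 1
      push_cast
      rw [Ordinal.add_one_eq_succ, opow_succ]
  
/-! ### Uniqueness of `SubEnum`s -/

lemma subEnum_unique {S : Set ℝ} (f g : SubEnum S) : ∀ α < wOmega, f.e α = g.e α := by
  intro α
  induction α using Ordinal.induction with
  | h α IH =>
    intro hα
    obtain ⟨γ, hγ, hγe⟩ := g.surj (f.e α) (f.mem α hα)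
    rcases lt_trichotomy γ α with hc | rfl | hc
    · exfalso
      have h1 : g.e γ = f.e γ := (IH γ hc (hc.trans hα)).symm
      rw [h1] at hγe
      have := (f.anti (hc.trans hα) hα).1 hc
      rw [hγe] at this
      exact lt_irrefl _ this
    · exact hγe.symm
    · obtain ⟨δ, hδ, hδe⟩ := f.surj (g.e α) (g.mem α hα)
      rcases lt_trichotomy δ α with hd | rfl | hd
      · exfalso
        have h1 : f.e δ = g.e δ := IH δ hd (hd.trans hα)
        rw [h1] at hδe
        have := (g.anti (hd.trans hα) hα).1 hd
        rw [hδe] at this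
        exact lt_irrefl _ this
      · exact hδe
      · exfalso
        have h1 : g.e γ < g.e α := (g.anti hα hγ).1 hc
        rw [hγe, ← hδe] at h1
        exact lt_asymm hd ((f.anti hδ hα).2 h1)

/-! ### Index bookkeeping -/

lemma index_le {u : ℕ} {α : Ordinal} (hα : α < wOmega) :
    Ordinal.omega0 ^ (u : Ordinal) * (α + 1) ≤ wOmega := by
  have h1 : α + 1 ≤ wOmega := (wOmega_isLimit.succ_lt hα).le
  calc Ordinal.omega0 ^ (u : Ordinal) * (α + 1)
      ≤ Ordinal.omega0 ^ (u : Ordinal) * wOmega := mul_le_mul_right h1 _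
    _ = wOmega := opow_mul_wOmega u

/-- Membership characterization of `T u = K^(u) \ K^(u+1)` for `u ≥ 1`. -/
lemma Tu_char {K : Set ℝ} (hK : IsCompact K) (E : OrdEnum K) (u : ℕ) (hu : 1 ≤ u)
    {x : ℝ} : x ∈ iterDeriv K u \ iterDeriv K (u + 1) ↔
      ∃ α < wOmega, E.e (Ordinal.omega0 ^ (u : Ordinal) * (α + 1)) = x := by
  obtain ⟨Eu, hEu⟩ := iter_enum hK E u hu
  obtain ⟨Eu1, hEu1⟩ := iter_enum hK E (u + 1) (by omega)
  have hmulu : ∀ β ≤ wOmega, Ordinal.omega0 ^ (u : Ordinal) * (1 + β) ≤ wOmega := by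
    intro β hβ
    calc Ordinal.omega0 ^ (u : Ordinal) * (1 + β)
        ≤ Ordinal.omega0 ^ (u : Ordinal) * wOmega := mul_le_mul_right (one_add_le_wOmega hβ) _
      _ = wOmega := opow_mul_wOmega u
  have hpow : (0 : Ordinal) < Ordinal.omega0 ^ (u : Ordinal) := opow_pos _ omega0_pos
  constructor
  · rintro ⟨hx1, hx2⟩
    obtain ⟨β, hβ, hβe⟩ := Eu.surj x hx1
    rw [hEu] at hβe
    -- 1 + β is not a limit (else x would be in the next derived set)
    have hnotlim : ¬ (1 + β).IsLimit := by
      intro hlim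
      obtain ⟨γ, hγ⟩ := (isLimit_iff_omega0_dvd.1 hlim).2
      have hγ0 : γ ≠ 0 := by
        rintro rfl
        rw [mul_zero] at hγ
        exact (isLimit_iff_omega0_dvd.1 hlim).1 hγ
      have hγ1 : 1 ≤ γ := one_le_iff_ne_zero.2 hγ0
      have hγW : γ ≤ wOmega := by
        refine Ordinal.le_of_mul_le_mul_left ?_ omega0_pos
        rw [← hγ, omega0_mul_wOmega]
        exact one_add_le_wOmega hβ
      have hδ : 1 + (γ - 1) = γ := Ordinal.add_sub_cancel_of_le hγ1
      apply hx2
      have : x = Eu1.e (γ - 1) := by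
        rw [hEu1, hδ, ← hβe, hγ]
        push_cast
        rw [Ordinal.add_one_eq_succ, opow_succ, mul_assoc]
      rw [this]
      exact Eu1.mem _ ((sub_le_self γ 1).trans hγW)
    have h1β : 1 + β ≠ 0 := Ordinal.one_le_iff_ne_zero.1 (Ordinal.le_add_right 1 β)
    rcases Ordinal.zero_or_succ_or_limit (1 + β) with hz | ⟨δ, hδ⟩ | hlim
    · exact absurd hz h1β
    · rw [← Ordinal.add_one_eq_succ] at hδ
      refine ⟨δ, ?_, by rw [← hδ]; exact hβe⟩
      have : δ < δ + 1 := lt_add_one δ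
      have h2 : δ + 1 ≤ wOmega := hδ ▸ one_add_le_wOmega hβ
      rcases lt_or_eq_of_le h2 with hlt | heq
      · exact this.trans hlt
      · exfalso
        have : (δ + 1).IsLimit := heq ▸ wOmega_isLimit
        rw [Ordinal.add_one_eq_succ] at this
        exact not_succ_isLimit δ this
    · exact absurd hlim hnotlim
  · rintro ⟨α, hα, rfl⟩
    constructor
    · -- in iterDeriv K u
      have hα1 : (1 : Ordinal) ≤ α + 1 := Ordinal.le_add_left 1 α
      have heq : 1 + (α + 1 - 1) = α + 1 := Ordinal.add_sub_cancel_of_le hα1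
      have : E.e (Ordinal.omega0 ^ (u : Ordinal) * (α + 1)) = Eu.e (α + 1 - 1) := by
        rw [hEu, heq]
      rw [this]
      exact Eu.mem _ ((sub_le_self _ 1).trans (wOmega_isLimit.succ_lt hα).le)
    · -- not in iterDeriv K (u+1)
      intro hmem
      obtain ⟨γ, hγ, hγe⟩ := Eu1.surj _ hmem
      rw [hEu1] at hγe
      have hb1 : Ordinal.omega0 ^ ((u + 1 : ℕ) : Ordinal) * (1 + γ) ≤ wOmega := by
        calc Ordinal.omega0 ^ ((u + 1 : ℕ) : Ordinal) * (1 + γ)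
            ≤ Ordinal.omega0 ^ ((u + 1 : ℕ) : Ordinal) * wOmega :=
              mul_le_mul_right (one_add_le_wOmega hγ) _
          _ = wOmega := opow_mul_wOmega (u + 1)
      have hind := E.inj hb1 (index_le hα) hγe
      rw [show ((u + 1 : ℕ) : Ordinal) = (u : Ordinal) + 1 by push_cast; rfl,
        Ordinal.add_one_eq_succ, opow_succ, mul_assoc] at hind
      have hcanc : Ordinal.omega0 * (1 + γ) = α + 1 := ord_mul_left_cancel hpow hind
      have hlim2 : (Ordinal.omega0 * (1 + γ)).IsLimit := by
        rw [isLimit_iff_omega0_dvd]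
        exact ⟨Ordinal.mul_ne_zero omega0_ne_zero
          (one_le_iff_ne_zero.1 (Ordinal.le_add_right 1 γ)), ⟨1 + γ, rfl⟩⟩
      rw [hcanc, Ordinal.add_one_eq_succ] at hlim2
      exact not_succ_isLimit α hlim2

/-- Membership characterization of `T 0 = K \ K'`. -/
lemma T0_char {K : Set ℝ} (hK : IsCompact K) (E : OrdEnum K) {x : ℝ} :
    x ∈ iterDeriv K 0 \ iterDeriv K 1 ↔
      ∃ α ≤ wOmega, ¬ α.IsLimit ∧ E.e α = x := by
  have h0 : iterDeriv K 0 = K := rfl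
  have h1 : iterDeriv K 1 = derivedSet K := by simp [iterDeriv]
  rw [h0, h1]
  constructor
  · rintro ⟨hx1, hx2⟩
    obtain ⟨α, hα, rfl⟩ := E.surj x hx1
    refine ⟨α, hα, fun hl => hx2 (acc_of_limit hK E hα hl), rfl⟩
  · rintro ⟨α, hα, hnl, rfl⟩
    exact ⟨E.mem α hα, not_acc_of_not_limit E hα hnl⟩

lemma h0_strictMono :
    StrictMono (fun α : Ordinal.{0} => if α < Ordinal.omega0 then α else α + 1) := by
  intro a b hab
  dsimp only
  split_ifs with h1 h2 h2
  · exact hab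
  · exact hab.trans (lt_add_one b)
  · exact absurd ((not_lt.1 h1).trans hab.le |>.trans_lt h2) (lt_irrefl _)
  · rw [Ordinal.add_one_eq_succ, Ordinal.add_one_eq_succ]
    exact Order.succ_lt_succ hab

theorem section_index_formula (K : Set ℝ) (ρ : ℝ) (μ : ℕ)
    (h : SelfSimilar K ρ μ) (T : ℕ → Set ℝ)
    (hT : ∀ u, T u = iterDeriv K u \ iterDeriv K (u + 1)) (E : OrdEnum K) :
    (∀ u : ℕ, 1 ≤ u → ∀ Eu : SubEnum (T u), ∀ α < wOmega,
      Eu.e α = E.e (Ordinal.omega0 ^ (u : Ordinal) * (α + 1))) ∧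
    (∀ E0 : SubEnum (T 0), ∀ α < wOmega,
      (α < Ordinal.omega0 → E0.e α = E.e α) ∧
      (Ordinal.omega0 ≤ α → E0.e α = E.e (α + 1))) := by
  have hKc : IsCompact K := h.1
  constructor
  · intro u hu Eu α hα
    have hchar : ∀ y : ℝ, y ∈ T u ↔
        ∃ β < wOmega, E.e (Ordinal.omega0 ^ (u : Ordinal) * (β + 1)) = y := by
      intro y
      rw [hT u]
      exact Tu_char hKc E u hu
    let g : SubEnum (T u) :=
      { e := fun β => E.e (Ordinal.omega0 ^ (u : Ordinal) * (β + 1))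
        mem := fun β hβ => (hchar _).2 ⟨β, hβ, rfl⟩
        surj := fun y hy => (hchar y).1 hy
        anti := by
          intro β γ hβ hγ
          show β < γ ↔ E.e (Ordinal.omega0 ^ (u : Ordinal) * (γ + 1)) <
            E.e (Ordinal.omega0 ^ (u : Ordinal) * (β + 1))
          rw [← E.anti (index_le hβ) (index_le hγ),
            Ordinal.mul_lt_mul_iff_left (opow_pos _ omega0_pos),
            Ordinal.add_one_eq_succ, Ordinal.add_one_eq_succ, Order.succ_lt_succ_iff] }
    exact subEnum_unique Eu g α hα
  · intro E0 α hα
    have hchar : ∀ y : ℝ, y ∈ T 0 ↔ ∃ β ≤ wOmega, ¬ β.IsLimit ∧ E.e β = y := by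
      intro y
      rw [hT 0]
      exact T0_char hKc E
    have hbnd : ∀ β < wOmega, (if β < Ordinal.omega0 then β else β + 1) ≤ wOmega := by
      intro β hβ
      split_ifs
      · exact hβ.le
      · exact (wOmega_isLimit.succ_lt hβ).le
    let g : SubEnum (T 0) :=
      { e := fun β => E.e (if β < Ordinal.omega0 then β else β + 1)
        mem := by
          intro β hβ
          refine (hchar _).2 ⟨_, hbnd β hβ, ?_, rfl⟩
          split_ifs with h1
          · intro hl
            exact absurd (omega0_le_of_isLimit hl) (not_le.2 h1)
          · rw [Ordinal.add_one_eq_succ]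
            exact not_succ_isLimit β
        surj := by
          intro y hy
          obtain ⟨β, hβ, hnl, rfl⟩ := (hchar y).1 hy
          have hβW : β < wOmega := lt_of_le_of_ne hβ (by rintro rfl; exact hnl wOmega_isLimit)
          by_cases h1 : β < Ordinal.omega0
          · refine ⟨β, hβW, ?_⟩
            show E.e (if β < Ordinal.omega0 then β else β + 1) = E.e β
            rw [if_pos h1]
          · rcases Ordinal.zero_or_succ_or_limit β with rfl | ⟨γ, hγ⟩ | hl
            · exact absurd omega0_pos h1
            · rw [← Ordinal.add_one_eq_succ] at hγ
              subst hγ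
              have hγω : ¬ γ < Ordinal.omega0 := by
                intro hc
                exact h1 (isLimit_omega0.succ_lt hc)
              refine ⟨γ, (lt_add_one γ).trans hβW, ?_⟩
              show E.e (if γ < Ordinal.omega0 then γ else γ + 1) = E.e (γ + 1)
              rw [if_neg hγω]
            · exact absurd hl hnl
        anti := by
          intro β γ hβ hγ
          show β < γ ↔ E.e (if γ < Ordinal.omega0 then γ else γ + 1) <
            E.e (if β < Ordinal.omega0 then β else β + 1)
          rw [← E.anti (hbnd β hβ) (hbnd γ hγ)]
          exact h0_strictMono.lt_iff_lt.symm }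
    have hg := subEnum_unique E0 g α hα
    constructor
    · intro h1
      rw [hg]
      show E.e (if α < Ordinal.omega0 then α else α + 1) = E.e α
      rw [if_pos h1]
    · intro h1
      rw [hg]
      show E.e (if α < Ordinal.omega0 then α else α + 1) = E.e (α + 1)
      rw [if_neg (not_lt.2 h1)]
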